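/- Let x̄ ∈ ℝⁿ (n = N·D) be a block-sparse signal with block support T (x̄ₖ = 0 for k ∉ T), let A ∈ ℝ^{m×n}, and suppose A_T has full column rank. Let x̂ ∈ ℝⁿ satisfy A x̂ = A x̄ + v and write δx = x̂ − x̄. If ‖δx_{T^c}‖ ≤ 2√N ‖A† v‖ (with A of full row rank and A† = Aᵀ(AAᵀ)⁻¹), then ‖δx_T‖ ≤ ‖A_T† v‖ + 2√N ‖A_T† A_{T^c}‖ ‖A† v‖, where ‖A_T† A_{T^c}‖ denotes the ℓ₂ operator norm. -/

import Mathlib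

open scoped BigOperators
open Matrix

noncomputable section

/-- The Euclidean (`ℓ₂`) norm of a finitely-indexed real vector. -/
def l2norm {ι : Type*} [Fintype ι] (x : ι → ℝ) : ℝ :=
  Real.sqrt (∑ i, (x i) ^ 2)

/-- The `ℓ₂` operator norm of a real matrix. -/
def l2opNorm {ι κ : Type*} [Fintype ι] [Fintype κ] [DecidableEq κ] (M : Matrix ι κ ℝ) : ℝ :=
  ‖LinearMap.toContinuousLinearMap (Matrix.toEuclideanLin M)‖

/-- The approximation `F_α` to the indicator of nonzeroness. -/
def Fa (α w : ℝ) : ℝ :=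
  if |w| ≤ 1 / α then 2 * α * |w| - α ^ 2 * w ^ 2 else 1

/-- The `k`-th block (of length `D`) of a block vector. -/
def blk {N D : ℕ} (x : Fin N × Fin D → ℝ) (k : Fin N) : Fin D → ℝ :=
  fun j => x (k, j)

/-- The cost function `J(x) = ∑ₖ F_α(‖xₖ‖)`. -/
def J {N D : ℕ} (α : ℝ) (x : Fin N × Fin D → ℝ) : ℝ :=
  ∑ k, Fa α (l2norm (blk x k))

/-- Pseudo-inverse `A† = Aᵀ (A Aᵀ)⁻¹` of a full-row-rank matrix. -/
def pinvR {ι κ : Type*} [Fintype ι] [Fintype κ] [DecidableEq ι] (A : Matrix ι κ ℝ) :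
    Matrix κ ι ℝ :=
  Aᵀ * (A * Aᵀ)⁻¹

/-- Pseudo-inverse `A† = (Aᵀ A)⁻¹ Aᵀ` of a full-column-rank matrix. -/
def pinvC {ι κ : Type*} [Fintype ι] [Fintype κ] [DecidableEq κ] (A : Matrix ι κ ℝ) :
    Matrix κ ι ℝ :=
  (Aᵀ * A)⁻¹ * Aᵀ

/-- The submatrix `A_T` formed by the column blocks of `A` indexed by `T`. -/
def subCols {ι : Type*} {N D : ℕ} (A : Matrix ι (Fin N × Fin D) ℝ) (T : Finset (Fin N)) :
    Matrix ι (↥T × Fin D) ℝ :=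
  A.submatrix id (fun p => ((p.1 : Fin N), p.2))

/-- The subvector `x_T` formed by the blocks of `x` indexed by `T`. -/
def subVec {N D : ℕ} (x : Fin N × Fin D → ℝ) (T : Finset (Fin N)) : ↥T × Fin D → ℝ :=
  fun p => x ((p.1 : Fin N), p.2)


lemma l2norm_eq_norm {ι : Type*} [Fintype ι] (x : ι → ℝ) :
    l2norm x = ‖(WithLp.equiv 2 (ι → ℝ)).symm x‖ := by
  rw [EuclideanSpace.norm_eq]
  simp only [l2norm, Real.norm_eq_abs, sq_abs]
  rfl

lemma l2norm_sub_le {ι : Type*} [Fintype ι] (b c : ι → ℝ) :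
    l2norm (b - c) ≤ l2norm b + l2norm c := by
  have heq : (WithLp.equiv 2 (ι → ℝ)).symm (b - c) =
      (WithLp.equiv 2 (ι → ℝ)).symm b - (WithLp.equiv 2 (ι → ℝ)).symm c := rfl
  rw [l2norm_eq_norm, heq, l2norm_eq_norm b, l2norm_eq_norm c]
  exact norm_sub_le _ _

lemma l2norm_nonneg {ι : Type*} [Fintype ι] (x : ι → ℝ) : 0 ≤ l2norm x := by
  rw [l2norm_eq_norm]; exact norm_nonneg _

lemma l2norm_mulVec_le {ι κ : Type*} [Fintype ι] [Fintype κ] [DecidableEq κ]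
    (M : Matrix ι κ ℝ) (y : κ → ℝ) :
    l2norm (M *ᵥ y) ≤ l2opNorm M * l2norm y := by
  have h := (LinearMap.toContinuousLinearMap (Matrix.toEuclideanLin M)).le_opNorm
      ((WithLp.equiv 2 (κ → ℝ)).symm y)
  have he : (LinearMap.toContinuousLinearMap (Matrix.toEuclideanLin M))
      ((WithLp.equiv 2 (κ → ℝ)).symm y) = (WithLp.equiv 2 (ι → ℝ)).symm (M *ᵥ y) := by
    simpa using Matrix.toEuclideanLin_apply_piLp_equiv_symm M y
  rw [he] at h
  rw [← l2norm_eq_norm, ← l2norm_eq_norm] at h; exact h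

/-- Bound on the on-support deviation: if `A x̂ = A x̄ + v` and
`‖δx_{Tᶜ}‖ ≤ 2√N ‖A† v‖`, then
`‖δx_T‖ ≤ ‖A_T† v‖ + 2√N ‖A_T† A_{Tᶜ}‖ ‖A† v‖`. -/
theorem onsupport_deviation {m N D : ℕ} (A : Matrix (Fin m) (Fin N × Fin D) ℝ)
    (xbar xhat : Fin N × Fin D → ℝ) (v : Fin m → ℝ) (T : Finset (Fin N))
    (hsupp : ∀ k ∉ T, blk xbar k = 0)
    (hrow : A.rank = m)
    (hcol : (subCols A T).rank = Fintype.card (↥T × Fin D))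
    (hfeas : A *ᵥ xhat = A *ᵥ xbar + v)
    (hTc : l2norm (subVec (xhat - xbar) Tᶜ) ≤ 2 * Real.sqrt N * l2norm (pinvR A *ᵥ v)) :
    l2norm (subVec (xhat - xbar) T) ≤
      l2norm (pinvC (subCols A T) *ᵥ v) +
        2 * Real.sqrt N * l2opNorm (pinvC (subCols A T) * subCols A Tᶜ) *
          l2norm (pinvR A *ᵥ v) := by
  set δ := xhat - xbar with hδ
  set B := subCols A T with hB
  set C := subCols A Tᶜ with hC
  -- A δ = v
  have hAδ : A *ᵥ δ = v := by
    rw [hδ, Matrix.mulVec_sub, hfeas]; abel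
  -- split
  have hsplit : A *ᵥ δ = B *ᵥ subVec δ T + C *ᵥ subVec δ Tᶜ := by
    funext i
    simp only [Matrix.mulVec, dotProduct, Pi.add_apply, hB, hC, subCols, subVec,
      Matrix.submatrix_apply, id_eq, Fintype.sum_prod_type]
    rw [← Finset.sum_add_sum_compl T (fun k => ∑ j, A i (k, j) * δ (k, j))]
    congr 1
    · rw [← Finset.sum_coe_sort T]
    · rw [← Finset.sum_coe_sort Tᶜ]
  -- Gram matrix invertible
  have hGram : IsUnit (Bᵀ * B).det := by
    have hr : (Bᵀ * B).rank = Fintype.card (↥T × Fin D) := by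
      rw [Matrix.rank_transpose_mul_self]; exact hcol
    have hsurj : Function.Surjective (Bᵀ * B).mulVec := by
      rw [← Matrix.coe_mulVecLin, ← LinearMap.range_eq_top]
      apply Submodule.eq_top_of_finrank_eq
      rw [← Matrix.rank, hr, Module.finrank_pi]
    exact (Matrix.isUnit_iff_isUnit_det _).mp (Matrix.mulVec_surjective_iff_isUnit.mp hsurj)
  have hPB : pinvC B * B = 1 := by
    rw [pinvC, Matrix.mul_assoc, Matrix.nonsing_inv_mul _ hGram]
  -- express subVec δ T
  have hkey : subVec δ T = pinvC B *ᵥ v - (pinvC B * C) *ᵥ subVec δ Tᶜ := by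
    have : pinvC B *ᵥ v = subVec δ T + (pinvC B * C) *ᵥ subVec δ Tᶜ := by
      rw [← hAδ, hsplit, Matrix.mulVec_add, Matrix.mulVec_mulVec, Matrix.mulVec_mulVec, hPB,
        Matrix.one_mulVec]
    rw [this]; abel
  calc l2norm (subVec δ T)
      ≤ l2norm (pinvC B *ᵥ v) + l2norm ((pinvC B * C) *ᵥ subVec δ Tᶜ) := by
        rw [hkey]; exact l2norm_sub_le _ _
    _ ≤ l2norm (pinvC B *ᵥ v) + l2opNorm (pinvC B * C) * l2norm (subVec δ Tᶜ) := by
        gcongr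
        exact l2norm_mulVec_le _ _
    _ ≤ l2norm (pinvC B *ᵥ v) +
          2 * Real.sqrt N * l2opNorm (pinvC B * C) * l2norm (pinvR A *ᵥ v) := by
        have hop : (0:ℝ) ≤ l2opNorm (pinvC B * C) := norm_nonneg _
        have := mul_le_mul_of_nonneg_left hTc hop
        nlinarith [this]
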